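/- Let C and C' be finite sets of clients with |C| = |C'| = n, let k ≤ n, let m ≤ n be a natural number with |C' \ C| ≤ m, and let f : Finset Client → Label be any function. Then for any two labels y and i, as integers, N_y(C', f) − N_i(C', f) ≥ N_y(C, f) − N_i(C, f) − 2·(C(n,k) − C(n−m,k)). -/
import Mathlib


open Finset

/-- Label count: number of `k`-element subsets `T` of `S` with `f T = j`. -/
def labelCount {Client Label : Type} [DecidableEq Client] [DecidableEq Label]
    (k : ℕ) (f : Finset Client → Label) (S : Finset Client) (j : Label) : ℕ :=
  ((S.powersetCard k).filter (fun T => f T = j)).card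

lemma labelCount_mono {Client Label : Type} [DecidableEq Client] [DecidableEq Label]
    (k : ℕ) (f : Finset Client → Label) {A S : Finset Client} (h : A ⊆ S) (j : Label) :
    labelCount k f A j ≤ labelCount k f S j := by
  apply Finset.card_le_card
  exact Finset.filter_subset_filter _ (Finset.powersetCard_mono h)

lemma labelCount_upper {Client Label : Type} [DecidableEq Client] [DecidableEq Label]
    (k : ℕ) (f : Finset Client → Label) {A S : Finset Client} (h : A ⊆ S) (j : Label) :
    labelCount k f S j + A.card.choose k ≤ labelCount k f A j + S.card.choose k := by
  have hpow : A.powersetCard k ⊆ S.powersetCard k := Finset.powersetCard_mono h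
  have h1 : (S.powersetCard k).filter (fun T => f T = j) ⊆
      (A.powersetCard k).filter (fun T => f T = j) ∪ (S.powersetCard k \ A.powersetCard k) := by
    intro T hT
    simp only [Finset.mem_filter, Finset.mem_union, Finset.mem_sdiff] at *
    by_cases hTA : T ∈ A.powersetCard k
    · exact Or.inl ⟨hTA, hT.2⟩
    · exact Or.inr ⟨hT.1, hTA⟩
  have h2 := Finset.card_le_card h1
  have h3 := Finset.card_union_le
    ((A.powersetCard k).filter (fun T => f T = j)) (S.powersetCard k \ A.powersetCard k)
  have h4 : (S.powersetCard k \ A.powersetCard k).card + (A.powersetCard k).card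
      = (S.powersetCard k).card := Finset.card_sdiff_add_card_eq_card hpow
  have h5 : (A.powersetCard k).card = A.card.choose k := Finset.card_powersetCard k A
  have h6 : (S.powersetCard k).card = S.card.choose k := Finset.card_powersetCard k S
  unfold labelCount
  omega

theorem labelCount_diff_bound
    {Client Label : Type} [DecidableEq Client] [DecidableEq Label]
    (n k : ℕ) (hkn : k ≤ n)
    (C C' : Finset Client) (hC : C.card = n) (hC' : C'.card = n)
    (m : ℕ) (hmn : m ≤ n) (hm : (C' \ C).card ≤ m)
    (f : Finset Client → Label) (y i : Label) :
    (labelCount k f C y : ℤ) - (labelCount k f C i : ℤ)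
      - 2 * ((Nat.choose n k : ℤ) - (Nat.choose (n - m) k : ℤ))
    ≤ (labelCount k f C' y : ℤ) - (labelCount k f C' i : ℤ) := by
  set A := C' ∩ C with hA
  have hAC : A ⊆ C := Finset.inter_subset_right
  have hAC' : A ⊆ C' := Finset.inter_subset_left
  have hsd : C' \ A = C' \ C := by
    ext x; simp [hA, Finset.mem_sdiff]
  have hAcard : A.card + (C' \ C).card = n := by
    have := Finset.card_sdiff_add_card_eq_card hAC'
    rw [hsd] at this
    omega
  have hnm : n - m ≤ A.card := by omega
  have hch1 : (n - m).choose k ≤ A.card.choose k := Nat.choose_le_choose k hnm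
  have hch2 : A.card.choose k ≤ n.choose k := by
    apply Nat.choose_le_choose; omega
  have hchle : (n - m).choose k ≤ n.choose k := le_trans hch1 hch2
  -- y side
  have hy1 : labelCount k f A y ≤ labelCount k f C' y := labelCount_mono k f hAC' y
  have hy2 : labelCount k f C y + A.card.choose k
      ≤ labelCount k f A y + C.card.choose k := labelCount_upper k f hAC y
  -- i side
  have hi1 : labelCount k f A i ≤ labelCount k f C i := labelCount_mono k f hAC i
  have hi2 : labelCount k f C' i + A.card.choose k
      ≤ labelCount k f A i + C'.card.choose k := labelCount_upper k f hAC' i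
  rw [hC] at hy2
  rw [hC'] at hi2
  have key : labelCount k f C y + labelCount k f C' i + 2 * (n - m).choose k
      ≤ labelCount k f C' y + labelCount k f C i + 2 * n.choose k := by omega
  have := Nat.cast_le (α := ℤ) |>.mpr key
  push_cast at this ⊢
  linarith
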